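/- arXiv:math/0006070 — 2 statements merged into one kernel-verified Lean document; each statement's English description precedes it below -/
import Mathlib

section
/- Let G denote the Barnes G-function, defined by G(1+z) = (2π)^{z/2} exp(-(z+1)z/2 - γ z²/2) ∏_{k=1}^∞ (1+z/k)^k exp(-z + z²/2k), where γ is the Euler–Mascheroni constant. Then G satisfies the functional equation G(1+z) = Γ(z) G(z) for all z that are not nonpositive integers. -/
open scoped Real

/-- The Barnes G-function, defined by its Weierstrass product:
`G(1+z) = (2π)^{z/2} exp(-(z+1)z/2 - γz²/2) ∏_{k≥1} (1+z/k)^k exp(-z + z²/(2k))`,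
i.e. `barnesG w` is this expression with `z = w - 1`. -/
noncomputable def barnesG (w : ℂ) : ℂ :=
  (2 * (Real.pi : ℂ)) ^ ((w - 1) / 2) *
    Complex.exp (-((w - 1) + 1) * (w - 1) / 2 -
      (Real.eulerMascheroniConstant : ℂ) * (w - 1) ^ 2 / 2) *
    ∏' k : ℕ,
      ((1 + (w - 1) / ((k : ℂ) + 1)) ^ (k + 1) *
        Complex.exp (-(w - 1) + (w - 1) ^ 2 / (2 * ((k : ℂ) + 1))))

open Filter Topology Finset

noncomputable def bT (w : ℂ) (k : ℕ) : ℂ :=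
  (1 + w / ((k : ℂ) + 1)) ^ (k + 1) * Complex.exp (-w + w ^ 2 / (2 * ((k : ℂ) + 1)))

noncomputable def bh (w : ℂ) (k : ℕ) : ℂ :=
  ((k : ℂ) + 1) * (Complex.log (1 + w / ((k : ℂ) + 1)) - w / ((k : ℂ) + 1)
    + (w / ((k : ℂ) + 1)) ^ 2 / 2)

lemma cubic_bound {u : ℂ} (hu : ‖u‖ ≤ 1/2) :
    ‖Complex.log (1 + u) - u + u ^ 2 / 2‖ ≤ 2/3 * ‖u‖ ^ 3 := by
  have h1 : ‖u‖ < 1 := lt_of_le_of_lt hu (by norm_num)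
  have := Complex.norm_log_sub_logTaylor_le 2 h1
  have hT : Complex.logTaylor 3 u = u - u ^ 2 / 2 := by
    simp [Complex.logTaylor_succ, Complex.logTaylor_zero]
    ring
  rw [hT] at this
  have h2 : Complex.log (1 + u) - u + u ^ 2 / 2 = Complex.log (1 + u) - (u - u ^ 2 / 2) := by ring
  rw [h2]
  norm_num at this
  refine this.trans ?_
  have h3 : (1 - ‖u‖)⁻¹ ≤ 2 := by
    rw [inv_le_comm₀ (by linarith) (by norm_num)]
    linarith
  have h4 : (0:ℝ) ≤ ‖u‖ ^ 3 := by positivity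
  nlinarith [mul_le_mul_of_nonneg_left h3 h4]

lemma bh_eq (w : ℂ) (k : ℕ) :
    bh w k = ((k : ℂ) + 1) * Complex.log (1 + w / ((k : ℂ) + 1)) - w
      + w ^ 2 / (2 * ((k : ℂ) + 1)) := by
  have hk : ((k : ℂ) + 1) ≠ 0 := Nat.cast_add_one_ne_zero k
  rw [bh]
  field_simp

lemma summable_bh (w : ℂ) : Summable (bh w) := by
  have hb : ∀ᶠ k : ℕ in atTop, ‖bh w k‖ ≤ 2/3 * ‖w‖ ^ 3 * (1/((k:ℝ)+1)^2) := by
    filter_upwards [eventually_ge_atTop (Nat.ceil (2 * ‖w‖))] with k hk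
    have hk1 : (0:ℝ) < (k:ℝ) + 1 := by positivity
    have hk2 : 2 * ‖w‖ ≤ (k:ℝ) + 1 := by
      calc 2 * ‖w‖ ≤ (Nat.ceil (2 * ‖w‖) : ℝ) := Nat.le_ceil _
        _ ≤ (k:ℝ) := by exact_mod_cast hk
        _ ≤ (k:ℝ) + 1 := by linarith
    have hu : ‖w / ((k:ℂ) + 1)‖ ≤ 1/2 := by
      rw [norm_div]
      have : ‖((k:ℂ) + 1)‖ = (k:ℝ) + 1 := by
        norm_cast
      rw [this, div_le_iff₀ hk1]
      nlinarith [norm_nonneg w]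
    have := cubic_bound hu
    rw [bh, norm_mul]
    have hnk : ‖((k:ℂ) + 1)‖ = (k:ℝ) + 1 := by
      norm_cast
    rw [hnk]
    calc ((k:ℝ)+1) * ‖Complex.log (1 + w / ((k:ℂ)+1)) - w / ((k:ℂ)+1) + (w / ((k:ℂ)+1)) ^ 2 / 2‖
        ≤ ((k:ℝ)+1) * (2/3 * ‖w / ((k:ℂ)+1)‖ ^ 3) := by
          gcongr
      _ = ((k:ℝ)+1) * (2/3 * (‖w‖/((k:ℝ)+1)) ^ 3) := by rw [norm_div, hnk]
      _ = 2/3 * ‖w‖ ^ 3 * (1/((k:ℝ)+1)^2) := by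
          have hk1 : ((k:ℝ) + 1) ≠ 0 := by positivity
          field_simp
  have hg : Summable (fun k : ℕ => 2/3 * ‖w‖ ^ 3 * (1/((k:ℝ)+1)^2)) := by
    apply Summable.mul_left
    have h2 : Summable (fun n : ℕ => 1 / (n : ℝ) ^ 2) := Real.summable_one_div_nat_pow.mpr one_lt_two
    have := (summable_nat_add_iff 1).mpr h2
    apply this.congr
    intro k
    push_cast
    ring
  refine Summable.of_norm_bounded_eventually hg ?_
  rwa [Nat.cofinite_eq_atTop]


lemma bT_eq (w : ℂ) (k : ℕ) (h : 1 + w / ((k : ℂ) + 1) ≠ 0) :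
    bT w k = Complex.exp (bh w k) := by
  rw [bT, bh_eq]
  have hc : ((k:ℂ)+1) = ((k+1 : ℕ) : ℂ) := by push_cast; ring
  rw [sub_eq_add_neg, Complex.exp_add, Complex.exp_add, hc, Complex.exp_add, Complex.exp_nat_mul,
    Complex.exp_log (hc ▸ h), Complex.exp_neg]
  ring

lemma hasProd_bT (w : ℂ) (hw : ∀ k : ℕ, 1 + w / ((k : ℂ) + 1) ≠ 0) :
    HasProd (bT w) (Complex.exp (∑' k, bh w k)) := by
  have := (summable_bh w).hasSum.cexp
  refine this.congr_fun fun k => ?_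
  exact bT_eq w k (hw k)

lemma keystep (z : ℂ) (n : ℕ) :
    ((n:ℂ)+z)^n * bT z n * (z+(n:ℂ)) * Complex.exp 1
      = bT (z-1) n * ((n:ℂ)+1+z)^(n+1) * Complex.exp ((z-1/2) * (1/((n:ℂ)+1))) := by
  have hn : ((n:ℂ)+1) ≠ 0 := Nat.cast_add_one_ne_zero n
  have hexp : Complex.exp (-z + z^2/(2*((n:ℂ)+1))) * Complex.exp 1
      = Complex.exp (-(z-1) + (z-1)^2/(2*((n:ℂ)+1)))
        * Complex.exp ((z-1/2)*(1/((n:ℂ)+1))) := by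
    rw [← Complex.exp_add, ← Complex.exp_add]
    congr 1
    field_simp
    ring
  rw [bT, bT,
    show (1 + z/((n:ℂ)+1)) = ((n:ℂ)+1+z)/((n:ℂ)+1) by field_simp,
    show (1 + (z-1)/((n:ℂ)+1)) = ((n:ℂ)+z)/((n:ℂ)+1) by field_simp; ring,
    div_pow, div_pow]
  linear_combination (((n:ℂ)+z)^(n+1) * ((n:ℂ)+1+z)^(n+1) / ((n:ℂ)+1)^(n+1)) * hexp

lemma prod_ident (z : ℂ) (n : ℕ) :
    (∏ k ∈ Finset.range n, bT z k) * (∏ j ∈ Finset.range n, (z + (j:ℂ))) * Complex.exp n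
      = (∏ k ∈ Finset.range n, bT (z-1) k) * ((n:ℂ) + z)^n *
        Complex.exp ((z - 1/2) * ∑ k ∈ Finset.range n, (1/((k:ℂ)+1))) := by
  induction n with
  | zero => simp
  | succ n ih =>
    rw [Finset.prod_range_succ, Finset.prod_range_succ, Finset.prod_range_succ,
        Finset.sum_range_succ]
    push_cast
    rw [Complex.exp_add ((n:ℂ)) 1, mul_add ((z : ℂ) - 1/2), Complex.exp_add]
    linear_combination (bT z n * (z + (n:ℂ)) * Complex.exp 1) * ih
      + ((∏ k ∈ Finset.range n, bT (z-1) k)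
          * Complex.exp ((z - 1/2) * ∑ k ∈ Finset.range n, (1/((k:ℂ)+1)))) * keystep z n

lemma tendsto_one_add_div_pow_cexp (z : ℂ) :
    Tendsto (fun n : ℕ => (1 + z/(n:ℂ))^n) atTop (𝓝 (Complex.exp z)) := by
  have hlog : Tendsto (fun n : ℕ => (n:ℂ) * Complex.log (1 + z/(n:ℂ))) atTop (𝓝 z) := by
    rw [show 𝓝 z = 𝓝 (z + 0) by rw [add_zero]]
    have h0 : Tendsto (fun n : ℕ => (n:ℂ) * Complex.log (1 + z/(n:ℂ)) - z) atTop (𝓝 0) := by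
      apply squeeze_zero_norm' (a := fun n : ℕ => ‖z‖^2 * (1/(n:ℝ)))
      · filter_upwards [eventually_ge_atTop (Nat.ceil (2 * ‖z‖) + 1)] with n hn
        have hn0 : 0 < (n:ℝ) := by
          have : 1 ≤ n := le_trans (Nat.le_add_left 1 _) hn
          exact_mod_cast this
        have hn2 : 2 * ‖z‖ ≤ (n:ℝ) := by
          calc 2 * ‖z‖ ≤ (Nat.ceil (2 * ‖z‖) : ℝ) := Nat.le_ceil _
            _ ≤ (n:ℝ) := by exact_mod_cast le_trans (Nat.le_add_right _ 1) hn
        have hu : ‖z/(n:ℂ)‖ ≤ 1/2 := by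
          rw [norm_div, Complex.norm_natCast, div_le_iff₀ hn0]
          nlinarith [norm_nonneg z]
        have hu1 : ‖z/(n:ℂ)‖ < 1 := lt_of_le_of_lt hu (by norm_num)
        have hb := Complex.norm_log_one_add_sub_self_le hu1
        have hinv : (1 - ‖z/(n:ℂ)‖)⁻¹ ≤ 2 := by
          rw [inv_le_comm₀ (by linarith [hu]) (by norm_num)]
          linarith [hu]
        have key : (n:ℂ) * Complex.log (1 + z/(n:ℂ)) - z
            = (n:ℂ) * (Complex.log (1 + z/(n:ℂ)) - z/(n:ℂ)) := by
          have : (n:ℂ) ≠ 0 := by exact_mod_cast hn0.ne'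
          field_simp
        rw [key, norm_mul, Complex.norm_natCast]
        calc (n:ℝ) * ‖Complex.log (1 + z/(n:ℂ)) - z/(n:ℂ)‖
            ≤ (n:ℝ) * (‖z/(n:ℂ)‖^2 * (1 - ‖z/(n:ℂ)‖)⁻¹ / 2) := by gcongr
          _ ≤ (n:ℝ) * (‖z/(n:ℂ)‖^2 * 2 / 2) := by
              gcongr
          _ = (n:ℝ) * (‖z‖/(n:ℝ))^2 := by
              rw [norm_div, Complex.norm_natCast]
              ring
          _ ≤ ‖z‖^2 * (1/(n:ℝ)) := by
              rw [div_pow]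
              have : (n:ℝ) * (‖z‖^2 / (n:ℝ)^2) = ‖z‖^2 / (n:ℝ) := by
                field_simp
              rw [this, one_div, div_eq_mul_inv]
      · have : Tendsto (fun n : ℕ => 1/(n:ℝ)) atTop (𝓝 0) :=
          tendsto_one_div_atTop_nhds_zero_nat
        simpa using this.const_mul (‖z‖^2)
    simpa using h0.add_const z
  have hexp := (Complex.continuous_exp.tendsto z).comp hlog
  apply hexp.congr'
  filter_upwards [eventually_ge_atTop (Nat.ceil (2 * ‖z‖) + 1)] with n hn
  have hn0 : 0 < (n:ℝ) := by
    have : 1 ≤ n := le_trans (Nat.le_add_left 1 _) hn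
    exact_mod_cast this
  have hn2 : 2 * ‖z‖ ≤ (n:ℝ) := by
    calc 2 * ‖z‖ ≤ (Nat.ceil (2 * ‖z‖) : ℝ) := Nat.le_ceil _
      _ ≤ (n:ℝ) := by exact_mod_cast le_trans (Nat.le_add_right _ 1) hn
  have hne : 1 + z/(n:ℂ) ≠ 0 := by
    intro h
    have : ‖z/(n:ℂ)‖ = 1 := by
      have : z/(n:ℂ) = -1 := by linear_combination h
      rw [this]; simp
    rw [norm_div, Complex.norm_natCast] at this
    rw [div_eq_one_iff_eq hn0.ne'] at this
    nlinarith [norm_nonneg z]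
  simp only [Function.comp]
  rw [Complex.exp_nat_mul, Complex.exp_log hne]

lemma harmonic_cast (n : ℕ) :
    (∑ k ∈ Finset.range n, (1/((k:ℂ)+1))) = (((harmonic n : ℝ)) : ℂ) := by
  rw [harmonic]
  push_cast
  simp [one_div]

lemma sqrt_nat_eq_exp (n : ℕ) (hn : 0 < n) :
    ((Real.sqrt n : ℝ) : ℂ) = Complex.exp ((Real.log n : ℂ)/2) := by
  have hn0 : (0:ℝ) < n := by exact_mod_cast hn
  rw [Real.sqrt_eq_rpow, Real.rpow_def_of_pos hn0, Complex.ofReal_exp]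
  push_cast
  ring_nf

lemma factorial_eq (n : ℕ) (hn : 0 < n) :
    ((n.factorial : ℕ) : ℂ) = ((Stirling.stirlingSeq n : ℝ) : ℂ) * ((Real.sqrt 2 : ℝ) : ℂ)
      * Complex.exp ((Real.log n : ℂ)/2) * (n:ℂ)^(n:ℕ) * Complex.exp (-(n:ℂ)) := by
  have hn0 : (0:ℝ) < n := by exact_mod_cast hn
  have hreal : ((n.factorial : ℕ) : ℝ) = Stirling.stirlingSeq n * Real.sqrt 2 * Real.sqrt n
      * (n:ℝ)^(n:ℕ) * Real.exp (-(n:ℝ)) := by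
    rw [Stirling.stirlingSeq]
    have h1 : Real.sqrt (2*n) = Real.sqrt 2 * Real.sqrt n := Real.sqrt_mul (by norm_num) _
    have h2 : ((n:ℝ) / Real.exp 1)^(n:ℕ) = (n:ℝ)^(n:ℕ) * Real.exp (-(n:ℝ)) := by
      rw [div_pow, Real.exp_neg, ← Real.exp_nat_mul, mul_one, div_eq_mul_inv]
    rw [h1, h2]
    have hsn : Real.sqrt n ≠ 0 := by positivity
    have hnn : (n:ℝ)^(n:ℕ) ≠ 0 := by positivity
    field_simp
  calc ((n.factorial : ℕ) : ℂ) = (((n.factorial : ℕ) : ℝ) : ℂ) := by push_cast; ring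
    _ = _ := by
        rw [hreal, ← sqrt_nat_eq_exp n hn]
        push_cast [Complex.ofReal_exp]
        ring

lemma gammaSeq_mul_B (z : ℂ) (hz : ∀ n : ℕ, z ≠ -(n : ℂ)) (n : ℕ) (hn : 0 < n) :
    Complex.GammaSeq z n
      * ((1 + z/(n:ℂ))^n
        * Complex.exp ((z - 1/2) * ((((harmonic n : ℝ) - Real.log n : ℝ)) : ℂ))
        * ((z+(n:ℂ))/(n:ℂ))
        * (((Real.sqrt 2 * Stirling.stirlingSeq n : ℝ)) : ℂ)⁻¹)
    = ((n:ℂ)+z)^n * Complex.exp ((z - 1/2) * (∑ k ∈ Finset.range n, (1/((k:ℂ)+1))) - (n:ℂ))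
        / ∏ j ∈ Finset.range n, (z + (j:ℂ)) := by
  have hnC : (n:ℂ) ≠ 0 := Nat.cast_ne_zero.mpr hn.ne'
  have e1 : (n:ℂ)^z = Complex.exp ((Real.log n : ℂ) * z) := by
    rw [Complex.cpow_def_of_ne_zero hnC, Complex.natCast_log]
  have eL : Complex.exp ((Real.log n : ℂ)) = (n:ℂ) := by
    rw [← Complex.ofReal_exp]
    norm_cast
    exact_mod_cast Real.exp_log (by exact_mod_cast hn)
  have ediff : ((((harmonic n : ℝ) - Real.log n : ℝ)) : ℂ)
      = ((harmonic n : ℝ) : ℂ) - (Real.log n : ℂ) := by push_cast; ring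
  have ecast : (((Real.sqrt 2 * Stirling.stirlingSeq n : ℝ)) : ℂ)
      = ((Real.sqrt 2 : ℝ) : ℂ) * ((Stirling.stirlingSeq n : ℝ) : ℂ) := by push_cast; ring
  have hPn : (∏ j ∈ Finset.range n, (z + (j:ℂ))) ≠ 0 := by
    apply Finset.prod_ne_zero_iff.mpr
    intro j _ h
    exact hz j (by linear_combination h)
  have hzn : z + (n:ℂ) ≠ 0 := fun h => hz n (by linear_combination h)
  have hs2 : ((Real.sqrt 2 : ℝ) : ℂ) ≠ 0 := by
    have : (0:ℝ) < Real.sqrt 2 := by positivity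
    exact_mod_cast ne_of_gt this
  have hstir : ((Stirling.stirlingSeq n : ℝ) : ℂ) ≠ 0 := by
    have h3 : 0 < Stirling.stirlingSeq n := by
      obtain ⟨m, rfl⟩ := Nat.exists_eq_add_of_lt hn
      simpa using Stirling.stirlingSeq'_pos m
    exact_mod_cast ne_of_gt h3
  rw [Complex.GammaSeq, Finset.prod_range_succ, e1, factorial_eq n hn, harmonic_cast, ediff, ecast]
  set E1 := Complex.exp ((Real.log n : ℂ) * z) with hE1
  set E2 := Complex.exp ((Real.log n : ℂ)/2) with hE2
  set E3 := Complex.exp (-(n:ℂ)) with hE3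
  set E4 := Complex.exp ((z - 1/2) * (((harmonic n : ℝ) : ℂ) - (Real.log n : ℂ))) with hE4
  set E5 := Complex.exp ((z - 1/2) * ((harmonic n : ℝ) : ℂ) - (n:ℂ)) with hE5
  have comb : E1 * E2 * E3 * E4 = E5 * (n:ℂ) := by
    rw [hE1, hE2, hE3, hE4, hE5,
      ← Complex.exp_add, ← Complex.exp_add, ← Complex.exp_add, ← eL, ← Complex.exp_add]
    congr 1
    ring
  have epow : (1 + z/(n:ℂ))^(n:ℕ) * (n:ℂ)^(n:ℕ) = ((n:ℂ)+z)^(n:ℕ) := by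
    rw [← mul_pow]
    congr 1
    field_simp
  have epow2 : ((n:ℂ)*(n:ℂ)⁻¹ + z*(n:ℂ)⁻¹)^(n:ℕ) * (n:ℂ)^(n:ℕ) = ((n:ℂ)+z)^(n:ℕ) := by
    rw [mul_inv_cancel₀ hnC, ← div_eq_mul_inv]; exact epow
  field_simp
  linear_combination (E1*E2*E3*E4) * epow2 + ((n:ℂ)+z)^(n:ℕ) * comb

lemma tendsto_Rn (z : ℂ) (hz : ∀ n : ℕ, z ≠ -(n : ℂ)) :
    Tendsto (fun n : ℕ => ((n:ℂ)+z)^n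
        * Complex.exp ((z - 1/2) * (∑ k ∈ Finset.range n, (1/((k:ℂ)+1))) - (n:ℂ))
        / ∏ j ∈ Finset.range n, (z + (j:ℂ))) atTop
      (𝓝 (Complex.Gamma z * (Complex.exp (z + ((Real.eulerMascheroniConstant : ℝ) : ℂ)
          * (z - 1/2)) / ((Real.sqrt (2*Real.pi) : ℝ) : ℂ)))) := by
  have hB2 : Tendsto (fun n : ℕ =>
      Complex.exp ((z - 1/2) * ((((harmonic n : ℝ) - Real.log n : ℝ)) : ℂ))) atTop
      (𝓝 (Complex.exp ((z - 1/2) * ((Real.eulerMascheroniConstant : ℝ) : ℂ)))) := by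
    apply (Complex.continuous_exp.tendsto _).comp
    apply Tendsto.const_mul
    exact (Complex.continuous_ofReal.tendsto _).comp Real.tendsto_harmonic_sub_log
  have hB3 : Tendsto (fun n : ℕ => (z+(n:ℂ))/(n:ℂ)) atTop (𝓝 1) := by
    have h0 : Tendsto (fun n : ℕ => z * ((n:ℂ))⁻¹) atTop (𝓝 0) := by
      apply squeeze_zero_norm' (a := fun n : ℕ => ‖z‖ * (1/(n:ℝ)))
      · filter_upwards [eventually_ge_atTop 1] with n hn
        rw [norm_mul, norm_inv, Complex.norm_natCast, one_div]
      · simpa using (tendsto_one_div_atTop_nhds_zero_nat).const_mul ‖z‖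
    have := h0.add_const 1
    rw [zero_add] at this
    apply this.congr'
    filter_upwards [eventually_ge_atTop 1] with n hn
    have hnC : (n:ℂ) ≠ 0 := Nat.cast_ne_zero.mpr (by omega)
    field_simp
  have hB4 : Tendsto (fun n : ℕ => (((Real.sqrt 2 * Stirling.stirlingSeq n : ℝ)) : ℂ)⁻¹)
      atTop (𝓝 ((((Real.sqrt 2 * Real.sqrt Real.pi : ℝ)) : ℂ))⁻¹) := by
    have hr : Tendsto (fun n : ℕ => (Real.sqrt 2 * Stirling.stirlingSeq n : ℝ)) atTop
        (𝓝 (Real.sqrt 2 * Real.sqrt Real.pi)) :=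
      Stirling.tendsto_stirlingSeq_sqrt_pi.const_mul _
    have hc : Tendsto (fun n : ℕ => (((Real.sqrt 2 * Stirling.stirlingSeq n : ℝ)) : ℂ)) atTop
        (𝓝 ((((Real.sqrt 2 * Real.sqrt Real.pi : ℝ)) : ℂ))) :=
      (Complex.continuous_ofReal.tendsto _).comp hr
    apply hc.inv₀
    have : (0:ℝ) < Real.sqrt 2 * Real.sqrt Real.pi := by positivity
    exact_mod_cast ne_of_gt this
  have hBall : Tendsto (fun n : ℕ => Complex.GammaSeq z n * ((1 + z/(n:ℂ))^n
      * Complex.exp ((z - 1/2) * ((((harmonic n : ℝ) - Real.log n : ℝ)) : ℂ))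
      * ((z+(n:ℂ))/(n:ℂ))
      * (((Real.sqrt 2 * Stirling.stirlingSeq n : ℝ)) : ℂ)⁻¹)) atTop
      (𝓝 (Complex.Gamma z * (Complex.exp z
        * Complex.exp ((z - 1/2) * ((Real.eulerMascheroniConstant : ℝ) : ℂ)) * 1
        * ((((Real.sqrt 2 * Real.sqrt Real.pi : ℝ)) : ℂ))⁻¹))) :=
    (Complex.GammaSeq_tendsto_Gamma z).mul
      ((((tendsto_one_add_div_pow_cexp z).mul hB2).mul hB3).mul hB4)
  have hval : Complex.Gamma z * (Complex.exp z
        * Complex.exp ((z - 1/2) * ((Real.eulerMascheroniConstant : ℝ) : ℂ)) * 1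
        * ((((Real.sqrt 2 * Real.sqrt Real.pi : ℝ)) : ℂ))⁻¹)
      = Complex.Gamma z * (Complex.exp (z + ((Real.eulerMascheroniConstant : ℝ) : ℂ)
          * (z - 1/2)) / ((Real.sqrt (2*Real.pi) : ℝ) : ℂ)) := by
    rw [← Complex.exp_add]
    rw [show Real.sqrt (2*Real.pi) = Real.sqrt 2 * Real.sqrt Real.pi from
      Real.sqrt_mul (by norm_num) _]
    rw [div_eq_mul_inv]
    ring_nf
  rw [← hval]
  apply hBall.congr'
  filter_upwards [eventually_ge_atTop 1] with n hn
  exact gammaSeq_mul_B z hz n (by omega)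


/-- the Barnes G-function satisfies `G(1+z) = Γ(z) G(z)` for all `z`
that are not nonpositive integers. -/
theorem stmt_2 (z : ℂ) (hz : ∀ n : ℕ, z ≠ -(n : ℂ)) :
    barnesG (1 + z) = Complex.Gamma z * barnesG z := by
  have hz1 : ∀ k : ℕ, 1 + z / ((k:ℂ)+1) ≠ 0 := by
    intro k h
    apply hz (k+1)
    have hk : ((k:ℂ)+1) ≠ 0 := Nat.cast_add_one_ne_zero k
    push_cast
    field_simp at h
    linear_combination h
  have hz2 : ∀ k : ℕ, 1 + (z-1) / ((k:ℂ)+1) ≠ 0 := by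
    intro k h
    apply hz k
    have hk : ((k:ℂ)+1) ≠ 0 := Nat.cast_add_one_ne_zero k
    field_simp at h
    linear_combination h
  have h1 := hasProd_bT z hz1
  have h2 := hasProd_bT (z-1) hz2
  set A := Complex.exp (∑' k, bh z k) with hA
  set B := Complex.exp (∑' k, bh (z-1) k) with hB
  have key : ∀ n : ℕ, (∏ k ∈ Finset.range n, bT z k)
      = (∏ k ∈ Finset.range n, bT (z-1) k) * (((n:ℂ)+z)^n
        * Complex.exp ((z - 1/2) * (∑ k ∈ Finset.range n, (1/((k:ℂ)+1))) - (n:ℂ))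
        / ∏ j ∈ Finset.range n, (z + (j:ℂ))) := by
    intro n
    have hQ : (∏ j ∈ Finset.range n, (z + (j:ℂ))) ≠ 0 := by
      apply Finset.prod_ne_zero_iff.mpr
      intro j _ h
      exact hz j (by linear_combination h)
    rw [mul_div_assoc', eq_div_iff hQ]
    apply mul_right_cancel₀ (Complex.exp_ne_zero (n:ℂ))
    have hee : Complex.exp ((z - 1/2) * (∑ k ∈ Finset.range n, (1/((k:ℂ)+1))) - (n:ℂ))
        * Complex.exp (n:ℂ)
        = Complex.exp ((z - 1/2) * (∑ k ∈ Finset.range n, (1/((k:ℂ)+1)))) := by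
      rw [← Complex.exp_add]
      congr 1
      ring
    linear_combination prod_ident z n - ((∏ k ∈ Finset.range n, bT (z-1) k)
      * ((n:ℂ)+z)^n) * hee
  have hAB : A = B * (Complex.Gamma z * (Complex.exp (z
      + ((Real.eulerMascheroniConstant : ℝ) : ℂ) * (z - 1/2))
      / ((Real.sqrt (2*Real.pi) : ℝ) : ℂ))) :=
    tendsto_nhds_unique h1.tendsto_prod_nat
      (((h2.tendsto_prod_nat).mul (tendsto_Rn z hz)).congr (fun n => (key n).symm))
  have e1 : barnesG (1+z) = (2 * (Real.pi : ℂ)) ^ ((1+z-1)/2) *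
      Complex.exp (-((1+z-1) + 1) * (1+z-1) / 2 -
        (Real.eulerMascheroniConstant : ℂ) * (1+z-1) ^ 2 / 2) * ∏' k, bT (1+z-1) k := by
    simp only [barnesG, bT]
  have e2 : barnesG z = (2 * (Real.pi : ℂ)) ^ ((z-1)/2) *
      Complex.exp (-((z-1) + 1) * (z-1) / 2 -
        (Real.eulerMascheroniConstant : ℂ) * (z-1) ^ 2 / 2) * ∏' k, bT (z-1) k := by
    simp only [barnesG, bT]
  simp only [add_sub_cancel_left] at e1
  rw [e1, e2, h1.tprod_eq, h2.tprod_eq, hAB]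
  have hsqrt : ((Real.sqrt (2*Real.pi) : ℝ) : ℂ) = (2*(Real.pi:ℂ))^((1:ℂ)/2) := by
    rw [Real.sqrt_eq_rpow, Complex.ofReal_cpow (by positivity)]
    push_cast
    norm_num
  have hbase : (2*(Real.pi:ℂ)) ≠ 0 := by
    have : (0:ℝ) < 2*Real.pi := by positivity
    exact_mod_cast ne_of_gt this
  have hsplit : (2*(Real.pi:ℂ))^(z/2)
      = (2*(Real.pi:ℂ))^((z-1)/2) * (2*(Real.pi:ℂ))^((1:ℂ)/2) := by
    rw [← Complex.cpow_add _ _ hbase]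
    congr 1
    ring
  set Ea := Complex.exp (-(z + 1) * z / 2 - (Real.eulerMascheroniConstant : ℂ) * z ^ 2 / 2)
    with hEa
  set Eb := Complex.exp (z + ((Real.eulerMascheroniConstant : ℝ) : ℂ) * (z - 1/2)) with hEb
  set Ec := Complex.exp (-((z-1) + 1) * (z-1) / 2
    - (Real.eulerMascheroniConstant : ℂ) * (z-1) ^ 2 / 2) with hEc
  have hexp2 : Ea * Eb = Ec := by
    rw [hEa, hEb, hEc, ← Complex.exp_add]
    congr 1
    ring
  have hne : (2*(Real.pi:ℂ))^((1:ℂ)/2) ≠ 0 := by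
    rw [← hsqrt]
    have : (0:ℝ) < Real.sqrt (2*Real.pi) := by positivity
    exact_mod_cast ne_of_gt this
  rw [hsqrt, hsplit]
  field_simp
  linear_combination (B * Complex.Gamma z) * hexp2
end

section
/- Let A and B be bounded operators on a Hilbert space such that AB and BA are trace class. Then det(I + AB) = det(I + BA), where det denotes the Fredholm determinant. -/
open scoped InnerProductSpace

variable {H : Type*} [NormedAddCommGroup H] [InnerProductSpace ℂ H] [CompleteSpace H]

/-- A bounded operator on a Hilbert space is trace class (nuclear) if it admits a
representation `T x = ∑ₖ ⟪uₖ, x⟫ vₖ` with `∑ₖ ‖uₖ‖‖vₖ‖ < ∞`. -/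
def IsTraceClass (T : H →L[ℂ] H) : Prop :=
  ∃ u v : ℕ → H, Summable (fun k => ‖u k‖ * ‖v k‖) ∧
    ∀ x, T x = ∑' k, ⟪u k, x⟫_ℂ • v k

/-- `TraceNormLT T c` asserts that `T` has a nuclear representation of total weight `< c`;
this holds for all `c` greater than the trace norm of `T`. -/
def TraceNormLT (T : H →L[ℂ] H) (c : ℝ) : Prop :=
  ∃ u v : ℕ → H, Summable (fun k => ‖u k‖ * ‖v k‖) ∧
    (∀ x, T x = ∑' k, ⟪u k, x⟫_ℂ • v k) ∧ (∑' k, ‖u k‖ * ‖v k‖) < c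

/-- The determinant `det(I + F)` of a finite-rank perturbation of the identity, computed
as the determinant of the restriction of `I + F` to the (invariant) range of `F`. -/
noncomputable def finRankDet (F : H →L[ℂ] H) : ℂ :=
  LinearMap.det ((LinearMap.id + (F : H →ₗ[ℂ] H)).restrict
    (p := LinearMap.range (F : H →ₗ[ℂ] H)) (q := LinearMap.range (F : H →ₗ[ℂ] H))
    (fun x hx => by
      simp only [LinearMap.add_apply, LinearMap.id_apply]
      exact Submodule.add_mem _ hx (LinearMap.mem_range_self _ x)))

/-- `IsFredholmDet fdet` asserts that `T ↦ fdet T` agrees with the finite-dimensional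
determinant `det(I + F)` on finite-rank operators `F` and is continuous in the trace
norm on trace class operators.  These properties characterize the Fredholm determinant
`fdet T = det(I + T)` on trace class operators. -/
def IsFredholmDet (fdet : (H →L[ℂ] H) → ℂ) : Prop :=
  (∀ F : H →L[ℂ] H, FiniteDimensional ℂ (LinearMap.range (F : H →ₗ[ℂ] H)) →
      fdet F = finRankDet F) ∧
  (∀ T : H →L[ℂ] H, IsTraceClass T → ∀ ε > (0 : ℝ), ∃ δ > (0 : ℝ),
      ∀ S : H →L[ℂ] H, IsTraceClass S → TraceNormLT (S - T) δ → ‖fdet S - fdet T‖ < ε)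

/-- `IsOperatorTrace tr` asserts that `tr` computes the trace `∑ₖ ⟪uₖ, vₖ⟫` of any
trace class operator given by a nuclear representation. -/
def IsOperatorTrace (tr : (H →L[ℂ] H) → ℂ) : Prop :=
  ∀ (T : H →L[ℂ] H) (u v : ℕ → H), Summable (fun k => ‖u k‖ * ‖v k‖) →
    (∀ x, T x = ∑' k, ⟪u k, x⟫_ℂ • v k) → tr T = ∑' k, ⟪u k, v k⟫_ℂ

set_option linter.unusedSectionVars false
set_option maxHeartbeats 1600000

namespace FredholmAux

open ContinuousLinearMap Filter


open ContinuousLinearMap Filter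

lemma summable_term {u v : ℕ → H} (hw : Summable fun k => ‖u k‖ * ‖v k‖) (x : H) :
    Summable fun k => ⟪u k, x⟫_ℂ • v k := by
  refine Summable.of_norm ?_
  refine Summable.of_nonneg_of_le (fun k => norm_nonneg _) (fun k => ?_) (hw.mul_right ‖x‖)
  rw [norm_smul]
  calc ‖⟪u k, x⟫_ℂ‖ * ‖v k‖ ≤ (‖u k‖ * ‖x‖) * ‖v k‖ := by
        gcongr; exact norm_inner_le_norm _ _
    _ = ‖u k‖ * ‖v k‖ * ‖x‖ := by ring

lemma _root_.IsTraceClass.comp_right {X : H →L[ℂ] H} (hX : IsTraceClass X) (Y : H →L[ℂ] H) :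
    IsTraceClass (X ∘L Y) := by
  obtain ⟨u, v, hw, hrep⟩ := hX
  refine ⟨fun k => adjoint Y (u k), v, ?_, fun x => ?_⟩
  · refine Summable.of_nonneg_of_le (fun k => by positivity) (fun k => ?_)
      (hw.mul_right ‖adjoint Y‖)
    calc ‖adjoint Y (u k)‖ * ‖v k‖ ≤ (‖adjoint Y‖ * ‖u k‖) * ‖v k‖ := by
          gcongr; exact le_opNorm _ _
      _ = ‖u k‖ * ‖v k‖ * ‖adjoint Y‖ := by ring
  · rw [comp_apply, hrep (Y x)]
    exact tsum_congr fun k => by rw [adjoint_inner_left]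

lemma _root_.IsTraceClass.comp_left {X : H →L[ℂ] H} (hX : IsTraceClass X) (Y : H →L[ℂ] H) :
    IsTraceClass (Y ∘L X) := by
  obtain ⟨u, v, hw, hrep⟩ := hX
  refine ⟨u, fun k => Y (v k), ?_, fun x => ?_⟩
  · refine Summable.of_nonneg_of_le (fun k => by positivity) (fun k => ?_) (hw.mul_right ‖Y‖)
    calc ‖u k‖ * ‖Y (v k)‖ ≤ ‖u k‖ * (‖Y‖ * ‖v k‖) := by gcongr; exact le_opNorm _ _
      _ = ‖u k‖ * ‖v k‖ * ‖Y‖ := by ring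
  · rw [comp_apply, hrep x, ContinuousLinearMap.map_tsum Y (summable_term hw x)]
    exact tsum_congr fun k => by rw [map_smul]

noncomputable def finApprox (u v : ℕ → H) (n : ℕ) : H →L[ℂ] H :=
  ∑ k ∈ Finset.range n, (innerSL ℂ (u k)).smulRight (v k)

lemma finApprox_apply (u v : ℕ → H) (n : ℕ) (x : H) :
    finApprox u v n x = ∑ k ∈ Finset.range n, ⟪u k, x⟫_ℂ • v k := by
  simp [finApprox, ContinuousLinearMap.sum_apply]

lemma isTraceClass_finApprox (u v : ℕ → H) (n : ℕ) : IsTraceClass (finApprox u v n) := by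
  refine ⟨fun k => if k < n then u k else 0, fun k => if k < n then v k else 0, ?_, fun x => ?_⟩
  · apply summable_of_ne_finset_zero (s := Finset.range n)
    intro k hk
    rw [Finset.mem_range, not_lt] at hk
    simp [if_neg (by omega : ¬ k < n)]
  · rw [finApprox_apply, tsum_eq_sum (s := Finset.range n) ?_]
    · refine Finset.sum_congr rfl fun k hk => ?_
      rw [Finset.mem_range] at hk
      simp [if_pos hk]
    · intro k hk
      rw [Finset.mem_range, not_lt] at hk
      simp [if_neg (by omega : ¬ k < n)]

lemma range_finApprox_le (u v : ℕ → H) (n : ℕ) :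
    LinearMap.range ((finApprox u v n : H →L[ℂ] H) : H →ₗ[ℂ] H)
      ≤ Submodule.span ℂ (Set.range fun k : Fin n => v k) := by
  rintro x ⟨y, rfl⟩
  show finApprox u v n y ∈ _
  rw [finApprox_apply]
  refine Submodule.sum_mem _ fun k hk => Submodule.smul_mem _ _ ?_
  rw [Finset.mem_range] at hk
  exact Submodule.subset_span ⟨⟨k, hk⟩, rfl⟩

lemma findim_range_finApprox (u v : ℕ → H) (n : ℕ) :
    FiniteDimensional ℂ (LinearMap.range ((finApprox u v n : H →L[ℂ] H) : H →ₗ[ℂ] H)) := by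
  haveI := FiniteDimensional.span_of_finite ℂ (Set.finite_range fun k : Fin n => v k)
  exact Submodule.finiteDimensional_of_le (range_finApprox_le u v n)

lemma comp_finApprox (u v : ℕ → H) (n : ℕ) (Y : H →L[ℂ] H) :
    Y ∘L finApprox u v n = finApprox u (fun k => Y (v k)) n := by
  ext x
  simp [comp_apply, finApprox_apply, map_sum]

lemma finApprox_comp (u v : ℕ → H) (n : ℕ) (Y : H →L[ℂ] H) :
    (finApprox u v n) ∘L Y = finApprox (fun k => adjoint Y (u k)) v n := by
  ext x
  simp [comp_apply, finApprox_apply, adjoint_inner_left]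

lemma det_id_add_comm {V W : Type*} [AddCommGroup V] [Module ℂ V] [AddCommGroup W] [Module ℂ W]
    [FiniteDimensional ℂ V] [FiniteDimensional ℂ W] (f : V →ₗ[ℂ] W) (g : W →ₗ[ℂ] V) :
    LinearMap.det (LinearMap.id + g ∘ₗ f) = LinearMap.det (LinearMap.id + f ∘ₗ g) := by
  classical
  let bV := Module.finBasis ℂ V
  let bW := Module.finBasis ℂ W
  rw [← LinearMap.det_toMatrix bV (LinearMap.id + g ∘ₗ f),
    ← LinearMap.det_toMatrix bW (LinearMap.id + f ∘ₗ g),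
    map_add, map_add, LinearMap.toMatrix_id, LinearMap.toMatrix_id,
    LinearMap.toMatrix_comp bV bW bV g f, LinearMap.toMatrix_comp bW bV bW f g]
  exact Matrix.det_one_add_mul_comm _ _

lemma finRankDet_eq_det (F : H →L[ℂ] H)
    (M : LinearMap.range (F : H →ₗ[ℂ] H) →ₗ[ℂ] LinearMap.range (F : H →ₗ[ℂ] H))
    (hM : ∀ x : LinearMap.range (F : H →ₗ[ℂ] H), (M x : H) = x + F x) :
    finRankDet F = LinearMap.det M := by
  unfold finRankDet
  congr 1
  apply LinearMap.ext
  rintro x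
  apply Subtype.ext
  rw [hM]
  simp [LinearMap.restrict_apply]

lemma finRankDet_comp_comm (S T : H →L[ℂ] H)
    (h₁ : FiniteDimensional ℂ (LinearMap.range ((S ∘L T : H →L[ℂ] H) : H →ₗ[ℂ] H)))
    (h₂ : FiniteDimensional ℂ (LinearMap.range ((T ∘L S : H →L[ℂ] H) : H →ₗ[ℂ] H))) :
    finRankDet (S ∘L T) = finRankDet (T ∘L S) := by
  have hf : ∀ x ∈ LinearMap.range ((S ∘L T : H →L[ℂ] H) : H →ₗ[ℂ] H),
      (T : H →ₗ[ℂ] H) x ∈ LinearMap.range ((T ∘L S : H →L[ℂ] H) : H →ₗ[ℂ] H) := by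
    rintro x ⟨y, rfl⟩
    exact ⟨T y, rfl⟩
  have hg : ∀ x ∈ LinearMap.range ((T ∘L S : H →L[ℂ] H) : H →ₗ[ℂ] H),
      (S : H →ₗ[ℂ] H) x ∈ LinearMap.range ((S ∘L T : H →L[ℂ] H) : H →ₗ[ℂ] H) := by
    rintro x ⟨y, rfl⟩
    exact ⟨S y, rfl⟩
  let f := (T : H →ₗ[ℂ] H).restrict hf
  let g := (S : H →ₗ[ℂ] H).restrict hg
  rw [finRankDet_eq_det (S ∘L T) (LinearMap.id + g ∘ₗ f) ?_,
    finRankDet_eq_det (T ∘L S) (LinearMap.id + f ∘ₗ g) ?_]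
  · exact det_id_add_comm f g
  · rintro ⟨x, hx⟩
    rfl
  · rintro ⟨x, hx⟩
    rfl





variable (B : H →L[ℂ] H) (t : ℝ)

noncomputable def opC : H →L[ℂ] H := adjoint B ∘L B

lemma opC_inner_right (x y : H) : ⟪x, opC B y⟫_ℂ = ⟪B x, B y⟫_ℂ :=
  adjoint_inner_right B x (B y)

lemma opC_inner_left (x y : H) : ⟪opC B x, y⟫_ℂ = ⟪B x, B y⟫_ℂ :=
  adjoint_inner_left B y (B x)

noncomputable def opCt : H →L[ℂ] H := opC B + (t : ℂ) • 1

lemma opCt_apply (x : H) : opCt B t x = opC B x + (t : ℂ) • x := by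
  simp [opCt]

lemma opCt_inner_right (x y : H) :
    ⟪x, opCt B t y⟫_ℂ = ⟪B x, B y⟫_ℂ + (t:ℂ) * ⟪x, y⟫_ℂ := by
  rw [opCt_apply, inner_add_right, inner_smul_right, opC_inner_right]

lemma opCt_inner_left (x y : H) :
    ⟪opCt B t x, y⟫_ℂ = ⟪B x, B y⟫_ℂ + (t:ℂ) * ⟪x, y⟫_ℂ := by
  rw [opCt_apply, inner_add_left, inner_smul_left, opC_inner_left, Complex.conj_ofReal]

lemma opCt_inner_symm (x y : H) : ⟪opCt B t x, y⟫_ℂ = ⟪x, opCt B t y⟫_ℂ := by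
  rw [opCt_inner_left, opCt_inner_right]

lemma re_inner_opCt (x : H) : (⟪x, opCt B t x⟫_ℂ).re = ‖B x‖^2 + t * ‖x‖^2 := by
  rw [opCt_inner_right]
  have h1 := inner_self_eq_norm_sq (𝕜 := ℂ) x
  have h2 := inner_self_eq_norm_sq (𝕜 := ℂ) (B x)
  have him1 := inner_self_im (𝕜 := ℂ) x
  simp only [RCLike.re_to_complex, RCLike.im_to_complex] at h1 h2 him1
  simp [Complex.add_re, Complex.mul_re, Complex.ofReal_re, Complex.ofReal_im, h1, h2, him1, ← Complex.ofReal_pow, Complex.ofReal_re]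

lemma norm_opCt_lower (ht : 0 < t) (x : H) : t * ‖x‖ ≤ ‖opCt B t x‖ := by
  rcases eq_or_ne x 0 with rfl | hx
  · simp
  have h1 : t * ‖x‖^2 ≤ (⟪x, opCt B t x⟫_ℂ).re := by
    rw [re_inner_opCt]; nlinarith [sq_nonneg ‖B x‖]
  have h2 : (⟪x, opCt B t x⟫_ℂ).re ≤ ‖⟪x, opCt B t x⟫_ℂ‖ := by
    exact Complex.re_le_norm _
  have h3 : ‖⟪x, opCt B t x⟫_ℂ‖ ≤ ‖x‖ * ‖opCt B t x‖ := norm_inner_le_norm _ _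
  have hxpos : 0 < ‖x‖ := norm_pos_iff.mpr hx
  nlinarith

lemma isUnit_opCt (ht : 0 < t) : IsUnit (opCt B t) := by
  have hker : LinearMap.ker (opCt B t : H →ₗ[ℂ] H) = ⊥ := by
    rw [LinearMap.ker_eq_bot']
    intro x hx
    have h := norm_opCt_lower B t ht x
    rw [show opCt B t x = 0 from hx, norm_zero] at h
    have hx0 : ‖x‖ ≤ 0 := by nlinarith
    exact norm_le_zero_iff.mp hx0
  have hanti : AntilipschitzWith (⟨t⁻¹, by positivity⟩ : NNReal) (opCt B t) := by
    apply ContinuousLinearMap.antilipschitz_of_bound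
    intro x
    have h := norm_opCt_lower B t ht x
    show ‖x‖ ≤ t⁻¹ * ‖opCt B t x‖
    calc ‖x‖ = t⁻¹ * (t * ‖x‖) := by field_simp
      _ ≤ t⁻¹ * ‖opCt B t x‖ := by gcongr
  have hclosed : IsClosed (Set.range (opCt B t)) :=
    hanti.isClosed_range (opCt B t).uniformContinuous
  have hrange : LinearMap.range (opCt B t : H →ₗ[ℂ] H) = ⊤ := by
    have horth : (LinearMap.range (opCt B t : H →ₗ[ℂ] H))ᗮ = ⊥ := by
      rw [Submodule.eq_bot_iff]
      intro z hz
      have h0 : ⟪opCt B t z, z⟫_ℂ = 0 :=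
        hz (opCt B t z) (LinearMap.mem_range_self _ z)
      have h1 : (⟪z, opCt B t z⟫_ℂ).re = 0 := by
        rw [← opCt_inner_symm, h0, Complex.zero_re]
      rw [re_inner_opCt] at h1
      have h2 : ‖z‖ = 0 := by
        by_contra hzz
        have hzpos : 0 < ‖z‖ := lt_of_le_of_ne (norm_nonneg z) (Ne.symm hzz)
        nlinarith [sq_nonneg ‖B z‖, mul_pos ht (mul_pos hzpos hzpos), sq_abs ‖z‖, sq_nonneg ‖z‖, mul_pos ht (pow_pos hzpos 2)]
      exact norm_eq_zero.mp h2
    have hcl : (LinearMap.range (opCt B t : H →ₗ[ℂ] H)).topologicalClosure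
        = LinearMap.range (opCt B t : H →ₗ[ℂ] H) := by
      apply IsClosed.submodule_topologicalClosure_eq
      simpa [LinearMap.coe_range] using hclosed
    rw [← hcl, ← Submodule.orthogonal_orthogonal_eq_closure, horth,
      Submodule.bot_orthogonal_eq_top]
  let e := ContinuousLinearEquiv.ofBijective (opCt B t) hker hrange
  refine ⟨⟨opCt B t, (e.symm : H →L[ℂ] H), ?_, ?_⟩, rfl⟩
  · ext x
    show opCt B t (e.symm x) = x
    exact e.apply_symm_apply x
  · ext x
    show e.symm (opCt B t x) = x
    exact e.symm_apply_apply x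

noncomputable def opJ : H →L[ℂ] H := Ring.inverse (opCt B t)

lemma opCt_opJ_apply (ht : 0 < t) (x : H) : opCt B t (opJ B t x) = x := by
  have h : opCt B t * opJ B t = 1 := by
    show opCt B t * Ring.inverse (opCt B t) = 1
    exact Ring.mul_inverse_cancel _ (isUnit_opCt B t ht)
  calc opCt B t (opJ B t x) = (opCt B t * opJ B t) x := rfl
    _ = (1 : H →L[ℂ] H) x := by rw [h]
    _ = x := rfl

lemma opJ_opCt_apply (ht : 0 < t) (x : H) : opJ B t (opCt B t x) = x := by
  have h : opJ B t * opCt B t = 1 := by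
    show Ring.inverse (opCt B t) * opCt B t = 1
    exact Ring.inverse_mul_cancel _ (isUnit_opCt B t ht)
  calc opJ B t (opCt B t x) = (opJ B t * opCt B t) x := rfl
    _ = (1 : H →L[ℂ] H) x := by rw [h]
    _ = x := rfl

lemma norm_opJ_le (ht : 0 < t) (x : H) : ‖opJ B t x‖ ≤ t⁻¹ * ‖x‖ := by
  have h := norm_opCt_lower B t ht (opJ B t x)
  rw [opCt_opJ_apply B t ht x] at h
  calc ‖opJ B t x‖ = t⁻¹ * (t * ‖opJ B t x‖) := by field_simp
    _ ≤ t⁻¹ * ‖x‖ := by gcongr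

lemma opJ_inner_symm (ht : 0 < t) (x y : H) : ⟪opJ B t x, y⟫_ℂ = ⟪x, opJ B t y⟫_ℂ := by
  conv_lhs => rw [← opCt_opJ_apply B t ht y]
  rw [← opCt_inner_symm, opCt_opJ_apply B t ht x]

noncomputable def opPi : H →L[ℂ] H :=
  haveI : CompleteSpace (LinearMap.ker (B : H →ₗ[ℂ] H)) := (isClosed_ker B).completeSpace_coe
  Submodule.subtypeL _ ∘L Submodule.orthogonalProjection (LinearMap.ker (B : H →ₗ[ℂ] H))

lemma opPi_mem (x : H) : opPi B x ∈ LinearMap.ker (B : H →ₗ[ℂ] H) := by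
  haveI : CompleteSpace (LinearMap.ker (B : H →ₗ[ℂ] H)) := (isClosed_ker B).completeSpace_coe
  exact (Submodule.orthogonalProjection (LinearMap.ker (B : H →ₗ[ℂ] H)) x).2

lemma B_opPi (x : H) : B (opPi B x) = 0 := by
  have := opPi_mem B x
  rwa [LinearMap.mem_ker, ContinuousLinearMap.coe_coe] at this

lemma opPi_inner_symm (x y : H) : ⟪opPi B x, y⟫_ℂ = ⟪x, opPi B y⟫_ℂ := by
  haveI : CompleteSpace (LinearMap.ker (B : H →ₗ[ℂ] H)) := (isClosed_ker B).completeSpace_coe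
  exact Submodule.inner_starProjection_left_eq_right _ x y

lemma opPi_apply_of_mem {x : H} (hx : x ∈ LinearMap.ker (B : H →ₗ[ℂ] H)) : opPi B x = x := by
  haveI : CompleteSpace (LinearMap.ker (B : H →ₗ[ℂ] H)) := (isClosed_ker B).completeSpace_coe
  have := Submodule.orthogonalProjectionOnto_mem_subspace_eq_self (K := LinearMap.ker (B : H →ₗ[ℂ] H)) ⟨x, hx⟩
  calc opPi B x = ↑(Submodule.orthogonalProjection (LinearMap.ker (B : H →ₗ[ℂ] H)) x) := rfl
    _ = x := by rw [this]

lemma norm_opPi_le (x : H) : ‖opPi B x‖ ≤ ‖x‖ := by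
  haveI : CompleteSpace (LinearMap.ker (B : H →ₗ[ℂ] H)) := (isClosed_ker B).completeSpace_coe
  calc ‖opPi B x‖ = ‖Submodule.orthogonalProjection (LinearMap.ker (B : H →ₗ[ℂ] H)) x‖ := rfl
    _ ≤ 1 * ‖x‖ := (Submodule.orthogonalProjection (LinearMap.ker (B : H →ₗ[ℂ] H))).le_of_opNorm_le
        (Submodule.orthogonalProjectionOnto_norm_le _) x
    _ = ‖x‖ := one_mul _

lemma sub_opPi_mem_orthogonal (x : H) : x - opPi B x ∈ (LinearMap.ker (B : H →ₗ[ℂ] H))ᗮ := by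
  haveI : CompleteSpace (LinearMap.ker (B : H →ₗ[ℂ] H)) := (isClosed_ker B).completeSpace_coe
  exact Submodule.sub_starProjection_mem_orthogonal x

noncomputable def opW : H →L[ℂ] H := opPi B - (t : ℂ) • opJ B t

lemma opW_apply (x : H) : opW B t x = opPi B x - (t:ℂ) • opJ B t x := rfl

lemma opW_inner_symm (ht : 0 < t) (x y : H) : ⟪opW B t x, y⟫_ℂ = ⟪x, opW B t y⟫_ℂ := by
  rw [opW_apply, opW_apply, inner_sub_left, inner_sub_right, opPi_inner_symm,
    inner_smul_left, inner_smul_right, Complex.conj_ofReal, opJ_inner_symm B t ht]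

lemma norm_opW_le (ht : 0 < t) (x : H) : ‖opW B t x‖ ≤ 2 * ‖x‖ := by
  rw [opW_apply]
  calc ‖opPi B x - (t:ℂ) • opJ B t x‖ ≤ ‖opPi B x‖ + ‖(t:ℂ) • opJ B t x‖ := norm_sub_le _ _
    _ ≤ ‖x‖ + t * (t⁻¹ * ‖x‖) := by
        refine add_le_add (norm_opPi_le B x) ?_
        rw [norm_smul, Complex.norm_real, Real.norm_eq_abs, abs_of_pos ht]
        exact mul_le_mul_of_nonneg_left (norm_opJ_le B t ht x) (le_of_lt ht)
    _ = 2 * ‖x‖ := by field_simp; ring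

lemma opC_opPi (x : H) : opC B (opPi B x) = 0 := by
  rw [opC, comp_apply, B_opPi, map_zero]

lemma smul_opJ_opPi (ht : 0 < t) (x : H) : (t:ℂ) • opJ B t (opPi B x) = opPi B x := by
  have h1 : opCt B t (opPi B x) = (t:ℂ) • opPi B x := by
    rw [opCt_apply, opC_opPi, zero_add]
  have h2 := opJ_opCt_apply B t ht (opPi B x)
  rw [h1, map_smul] at h2
  exact h2

lemma opW_eq (ht : 0 < t) (a : H) :
    opW B t a = -((t:ℂ) • opJ B t (a - opPi B a)) := by
  have h1 : opJ B t a = opJ B t (opPi B a) + opJ B t (a - opPi B a) := by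
    rw [← map_add]
    congr 1
    abel
  rw [opW_apply, h1, smul_add, smul_opJ_opPi B t ht]
  abel

lemma ker_opC : LinearMap.ker (opC B : H →ₗ[ℂ] H) = LinearMap.ker (B : H →ₗ[ℂ] H) := by
  ext x
  simp only [LinearMap.mem_ker, ContinuousLinearMap.coe_coe]
  constructor
  · intro h
    have h1 : ⟪B x, B x⟫_ℂ = 0 := by
      rw [← opC_inner_right, h, inner_zero_right]
    exact inner_self_eq_zero.mp h1
  · intro h
    rw [opC, comp_apply, h, map_zero]

lemma orthogonal_ker_opC :
    (LinearMap.ker (B : H →ₗ[ℂ] H))ᗮ = (LinearMap.range (opC B : H →ₗ[ℂ] H)).topologicalClosure := by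
  have h1 : LinearMap.ker (opC B : H →ₗ[ℂ] H) = (LinearMap.range (opC B : H →ₗ[ℂ] H))ᗮ := by
    ext z
    rw [LinearMap.mem_ker, Submodule.mem_orthogonal]
    constructor
    · intro h u hu
      obtain ⟨y, rfl⟩ := hu
      rw [ContinuousLinearMap.coe_coe, opC_inner_left]
      have hz : B z = 0 := by
        exact (ker_opC B).le h
      rw [hz, inner_zero_right]
    · intro h
      have h0 : ⟪opC B z, z⟫_ℂ = 0 := h (opC B z) (LinearMap.mem_range_self _ z)
      rw [opC_inner_left, inner_self_eq_zero] at h0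
      rw [opC, ContinuousLinearMap.coe_coe, comp_apply, h0, map_zero]
  rw [← ker_opC, h1, Submodule.orthogonal_orthogonal_eq_closure]

/-- strong convergence: `t ↦ ‖(Π - t J_t) a‖` tends to `0` along `t = 1/(n+1)`. -/
lemma opW_tendsto (a : H) :
    Tendsto (fun n : ℕ => ‖opW B (1/((n:ℝ)+1)) a‖) atTop (nhds 0) := by
  set w := a - opPi B a with hw
  have hwmem : w ∈ (LinearMap.range (opC B : H →ₗ[ℂ] H)).topologicalClosure := by
    rw [← orthogonal_ker_opC]
    exact sub_opPi_mem_orthogonal B a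
  rw [Metric.tendsto_atTop]
  intro ε hε
  -- approximate w by an element of range opC
  have hquarter : (0:ℝ) < ε/2 := by positivity
  have hcl : w ∈ closure ((LinearMap.range (opC B : H →ₗ[ℂ] H) : Submodule ℂ H) : Set H) := by
    rw [← Submodule.topologicalClosure_coe]
    exact hwmem
  rw [Metric.mem_closure_iff] at hcl
  obtain ⟨z, hzmem, hzdist⟩ := hcl ( ε/2) hquarter
  obtain ⟨y, rfl⟩ := hzmem
  -- choose N with 2/(N+1) * (‖y‖+1) < ε/2
  obtain ⟨N, hN⟩ := exists_nat_gt (4 * (‖y‖ + 1) / ε)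
  refine ⟨N, fun n hn => ?_⟩
  set t : ℝ := 1/((n:ℝ)+1) with hT
  have ht : 0 < t := by positivity
  have hwz : ‖w - opC B y‖ < ε/2 := by
    rw [← dist_eq_norm]
    exact hzdist
  -- key estimate
  have hJCy : opJ B t (opC B y) = y - (t:ℂ) • opJ B t y := by
    have : opC B y = opCt B t y - (t:ℂ) • y := by rw [opCt_apply]; abel
    rw [this, map_sub, opJ_opCt_apply B t ht, map_smul]
  have est : ‖opW B t a‖ ≤ ‖w - opC B y‖ + 2 * t * ‖y‖ := by
    rw [opW_eq B t ht a, ← hw, norm_neg]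
    have hsplit : (t:ℂ) • opJ B t w
        = (t:ℂ) • opJ B t (w - opC B y) + (t:ℂ) • opJ B t (opC B y) := by
      rw [← smul_add, ← map_add]
      congr 2
      abel
    rw [hsplit]
    calc ‖(t:ℂ) • opJ B t (w - opC B y) + (t:ℂ) • opJ B t (opC B y)‖
        ≤ ‖(t:ℂ) • opJ B t (w - opC B y)‖ + ‖(t:ℂ) • opJ B t (opC B y)‖ := norm_add_le _ _
      _ ≤ ‖w - opC B y‖ + 2 * t * ‖y‖ := by
          refine add_le_add ?_ ?_
          · rw [norm_smul, Complex.norm_real, Real.norm_eq_abs, abs_of_pos ht]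
            calc t * ‖opJ B t (w - opC B y)‖ ≤ t * (t⁻¹ * ‖w - opC B y‖) := by
                  gcongr
                  exact norm_opJ_le B t ht _
              _ = ‖w - opC B y‖ := by field_simp
          · rw [hJCy, norm_smul, Complex.norm_real, Real.norm_eq_abs, abs_of_pos ht]
            calc t * ‖y - (t:ℂ) • opJ B t y‖ ≤ t * (‖y‖ + ‖(t:ℂ) • opJ B t y‖) := by
                  gcongr
                  exact norm_sub_le _ _
              _ ≤ t * (‖y‖ + ‖y‖) := by
                  gcongr
                  rw [norm_smul, Complex.norm_real, Real.norm_eq_abs, abs_of_pos ht]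
                  calc t * ‖opJ B t y‖ ≤ t * (t⁻¹ * ‖y‖) := by
                        gcongr; exact norm_opJ_le B t ht y
                    _ = ‖y‖ := by field_simp
              _ = 2 * t * ‖y‖ := by ring
  -- conclude
  have htN : t ≤ 1/((N:ℝ)+1) := by
    rw [hT]
    apply one_div_le_one_div_of_le
    · positivity
    · have : (N:ℝ) ≤ n := Nat.cast_le.mpr hn
      linarith
  have hNbound : 2 * t * ‖y‖ < ε/2 := by
    have hεpos : (0:ℝ) < ε := hε
    have h1 : (0:ℝ) < (N:ℝ)+1 := by positivity
    have h2 : 4 * (‖y‖ + 1) / ε < (N:ℝ)+1 := by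
      have : (N:ℝ) < (N:ℝ)+1 := by linarith
      linarith
    have h3 : 4 * (‖y‖+1) < ε * ((N:ℝ)+1) := by
      rw [div_lt_iff₀ hεpos] at h2
      linarith [h2]
    have h4 : t ≤ 1/((N:ℝ)+1) := htN
    have h5 : 2 * t * ‖y‖ ≤ 2 * (1/((N:ℝ)+1)) * ‖y‖ := by
      gcongr
    have h6 : 2 * (1/((N:ℝ)+1)) * ‖y‖ < ε/2 := by
      have hy0 : (0:ℝ) ≤ ‖y‖ := norm_nonneg y
      have heq : 2 * (1/((N:ℝ)+1)) * ‖y‖ = 2*‖y‖/((N:ℝ)+1) := by ring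
      rw [heq, div_lt_iff₀ h1]
      nlinarith
    linarith
  rw [Real.dist_eq, sub_zero, abs_of_nonneg (norm_nonneg _)]
  calc ‖opW B t a‖ ≤ ‖w - opC B y‖ + 2 * t * ‖y‖ := est
    _ < ε/2 + ε/2 := add_lt_add hwz hNbound
    _ = ε := by ring



/-- tail representation of `X - finApprox u v n`. -/
lemma sub_finApprox_apply {X : H →L[ℂ] H} {u v : ℕ → H}
    (hw : Summable fun k => ‖u k‖ * ‖v k‖)
    (hrep : ∀ x, X x = ∑' k, ⟪u k, x⟫_ℂ • v k) (n : ℕ) (x : H) :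
    X x - finApprox u v n x = ∑' k, ⟪u (k + n), x⟫_ℂ • v (k + n) := by
  have hs := summable_term hw x
  have := Summable.sum_add_tsum_nat_add (f := fun k => ⟪u k, x⟫_ℂ • v k) n hs
  rw [hrep x, finApprox_apply, ← this]
  abel

lemma norm_eq_convergence {a b : ℂ} (h : ∀ ε > (0:ℝ), ‖a - b‖ < ε) : a = b := by
  by_contra hne
  have h0 : (0:ℝ) < ‖a - b‖ := by
    rw [norm_pos_iff]
    exact sub_ne_zero.mpr hne
  exact lt_irrefl _ (h _ h0)

lemma fdet_comp_comm {fdet : (H →L[ℂ] H) → ℂ} (hdet : IsFredholmDet fdet)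
    {X : H →L[ℂ] H} (hX : IsTraceClass X) (Y : H →L[ℂ] H) :
    fdet (X ∘L Y) = fdet (Y ∘L X) := by
  obtain ⟨u, v, hw, hrep⟩ := hX
  have hX' : IsTraceClass X := ⟨u, v, hw, hrep⟩
  apply norm_eq_convergence
  intro ε hε
  obtain ⟨δ₁, hδ₁, hc₁⟩ := hdet.2 (X ∘L Y) (IsTraceClass.comp_right hX' Y) (ε/2) (by positivity)
  obtain ⟨δ₂, hδ₂, hc₂⟩ := hdet.2 (Y ∘L X) (IsTraceClass.comp_left hX' Y) (ε/2) (by positivity)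
  set κ : ℝ := ‖Y‖ + ‖adjoint Y‖ + 1 with hκ
  have hκ1 : 1 ≤ κ := by
    rw [hκ]
    have h1 := norm_nonneg Y
    have h2 := norm_nonneg (adjoint Y)
    linarith
  have hκpos : 0 < κ := by positivity
  have hYκ : ‖Y‖ ≤ κ - 1 := by
    rw [hκ]; have := norm_nonneg (adjoint Y); linarith
  have hYaκ : ‖adjoint Y‖ ≤ κ - 1 := by
    rw [hκ]; have := norm_nonneg Y; linarith
  set δ : ℝ := min δ₁ δ₂ with hδdef
  have hδpos : 0 < δ := lt_min hδ₁ hδ₂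
  -- pick n with small tail
  obtain ⟨n, hn⟩ : ∃ n, ∑' k, ‖u (k + n)‖ * ‖v (k + n)‖ < δ / κ := by
    have := (tendsto_sum_nat_add (fun k => ‖u k‖ * ‖v k‖)).eventually_lt_const
      (by positivity : (0:ℝ) < δ / κ)
    exact this.exists
  have htail_nonneg : 0 ≤ ∑' k, ‖u (k + n)‖ * ‖v (k + n)‖ :=
    tsum_nonneg fun k => by positivity
  have htailsummable : Summable fun k => ‖u (k + n)‖ * ‖v (k + n)‖ :=
    (summable_nat_add_iff n).2 hw
  set F := finApprox u v n with hF
  -- 1st continuity estimate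
  have h₁ : ‖fdet (F ∘L Y) - fdet (X ∘L Y)‖ < ε/2 := by
    apply hc₁ (F ∘L Y) (by rw [hF, finApprox_comp]; exact isTraceClass_finApprox _ _ _)
    refine ⟨fun k => adjoint Y (u (k + n)), fun k => -(v (k + n)), ?_, fun x => ?_, ?_⟩
    · refine Summable.of_nonneg_of_le (fun k => by positivity) (fun k => ?_)
        (htailsummable.mul_right ‖adjoint Y‖)
      rw [norm_neg]
      calc ‖adjoint Y (u (k+n))‖ * ‖v (k+n)‖ ≤ (‖adjoint Y‖ * ‖u (k+n)‖) * ‖v (k+n)‖ := by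
            gcongr; exact le_opNorm _ _
        _ = ‖u (k+n)‖ * ‖v (k+n)‖ * ‖adjoint Y‖ := by ring
    · have := sub_finApprox_apply hw hrep n (Y x)
      rw [sub_apply, comp_apply, comp_apply, ← neg_sub (X (Y x)), this, ← tsum_neg]
      exact tsum_congr fun k => by rw [adjoint_inner_left, smul_neg]
    · calc ∑' k, ‖adjoint Y (u (k+n))‖ * ‖-(v (k+n))‖
          ≤ ∑' k, ‖adjoint Y‖ * (‖u (k+n)‖ * ‖v (k+n)‖) := by
            refine Summable.tsum_le_tsum (fun k => ?_) ?_ (htailsummable.mul_left ‖adjoint Y‖)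
            · rw [norm_neg]
              calc ‖adjoint Y (u (k+n))‖ * ‖v (k+n)‖
                  ≤ (‖adjoint Y‖ * ‖u (k+n)‖) * ‖v (k+n)‖ := by gcongr; exact le_opNorm _ _
                _ = ‖adjoint Y‖ * (‖u (k+n)‖ * ‖v (k+n)‖) := by ring
            · refine Summable.of_nonneg_of_le (fun k => by positivity) (fun k => ?_)
                (htailsummable.mul_left ‖adjoint Y‖)
              rw [norm_neg]
              calc ‖adjoint Y (u (k+n))‖ * ‖v (k+n)‖
                  ≤ (‖adjoint Y‖ * ‖u (k+n)‖) * ‖v (k+n)‖ := by gcongr; exact le_opNorm _ _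
                _ = ‖adjoint Y‖ * (‖u (k+n)‖ * ‖v (k+n)‖) := by ring
        _ = ‖adjoint Y‖ * ∑' k, ‖u (k+n)‖ * ‖v (k+n)‖ := tsum_mul_left
        _ ≤ (κ - 1) * ∑' k, ‖u (k+n)‖ * ‖v (k+n)‖ := by gcongr
        _ ≤ (κ - 1) * (δ / κ) := by
            have h1 : (0:ℝ) ≤ κ - 1 := by linarith
            exact mul_le_mul_of_nonneg_left (le_of_lt hn) h1
        _ < κ * (δ / κ) := by
            have : (0:ℝ) < δ / κ := by positivity
            nlinarith
        _ = δ := by field_simp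
        _ ≤ δ₁ := min_le_left _ _
  -- 2nd continuity estimate
  have h₂ : ‖fdet (Y ∘L F) - fdet (Y ∘L X)‖ < ε/2 := by
    apply hc₂ (Y ∘L F) (by rw [hF, comp_finApprox]; exact isTraceClass_finApprox _ _ _)
    refine ⟨fun k => u (k + n), fun k => -(Y (v (k + n))), ?_, fun x => ?_, ?_⟩
    · refine Summable.of_nonneg_of_le (fun k => by positivity) (fun k => ?_)
        (htailsummable.mul_right ‖Y‖)
      rw [norm_neg]
      calc ‖u (k+n)‖ * ‖Y (v (k+n))‖ ≤ ‖u (k+n)‖ * (‖Y‖ * ‖v (k+n)‖) := by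
            gcongr; exact le_opNorm _ _
        _ = ‖u (k+n)‖ * ‖v (k+n)‖ * ‖Y‖ := by ring
    · have htl := sub_finApprox_apply hw hrep n x
      have hsumtail : Summable fun k => ⟪u (k + n), x⟫_ℂ • v (k + n) := by
        have := summable_term hw x
        exact (summable_nat_add_iff n).2 this
      rw [sub_apply, comp_apply, comp_apply, ← map_sub Y, ← neg_sub (X x), map_neg, htl,
        ContinuousLinearMap.map_tsum Y hsumtail, ← tsum_neg]
      exact tsum_congr fun k => by rw [map_smul, smul_neg]
    · calc ∑' k, ‖u (k+n)‖ * ‖-(Y (v (k+n)))‖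
          ≤ ∑' k, ‖Y‖ * (‖u (k+n)‖ * ‖v (k+n)‖) := by
            refine Summable.tsum_le_tsum (fun k => ?_) ?_ (htailsummable.mul_left ‖Y‖)
            · rw [norm_neg]
              calc ‖u (k+n)‖ * ‖Y (v (k+n))‖ ≤ ‖u (k+n)‖ * (‖Y‖ * ‖v (k+n)‖) := by
                    gcongr; exact le_opNorm _ _
                _ = ‖Y‖ * (‖u (k+n)‖ * ‖v (k+n)‖) := by ring
            · refine Summable.of_nonneg_of_le (fun k => by positivity) (fun k => ?_)
                (htailsummable.mul_left ‖Y‖)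
              rw [norm_neg]
              calc ‖u (k+n)‖ * ‖Y (v (k+n))‖ ≤ ‖u (k+n)‖ * (‖Y‖ * ‖v (k+n)‖) := by
                    gcongr; exact le_opNorm _ _
                _ = ‖Y‖ * (‖u (k+n)‖ * ‖v (k+n)‖) := by ring
        _ = ‖Y‖ * ∑' k, ‖u (k+n)‖ * ‖v (k+n)‖ := tsum_mul_left
        _ ≤ (κ - 1) * ∑' k, ‖u (k+n)‖ * ‖v (k+n)‖ := by gcongr
        _ ≤ (κ - 1) * (δ / κ) := by
            have h1 : (0:ℝ) ≤ κ - 1 := by linarith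
            exact mul_le_mul_of_nonneg_left (le_of_lt hn) h1
        _ < κ * (δ / κ) := by
            have : (0:ℝ) < δ / κ := by positivity
            nlinarith
        _ = δ := by field_simp
        _ ≤ δ₂ := min_le_right _ _
  -- middle equality
  have i₁ : FiniteDimensional ℂ (LinearMap.range ((F ∘L Y : H →L[ℂ] H) : H →ₗ[ℂ] H)) := by
    rw [hF, finApprox_comp]; exact findim_range_finApprox _ _ _
  have i₂ : FiniteDimensional ℂ (LinearMap.range ((Y ∘L F : H →L[ℂ] H) : H →ₗ[ℂ] H)) := by
    rw [hF, comp_finApprox]; exact findim_range_finApprox _ _ _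
  have hmid : fdet (F ∘L Y) = fdet (Y ∘L F) := by
    rw [hdet.1 _ i₁, hdet.1 _ i₂]
    exact finRankDet_comp_comm F Y i₁ i₂
  have hsplit : fdet (X ∘L Y) - fdet (Y ∘L X)
      = (fdet (X ∘L Y) - fdet (F ∘L Y)) + (fdet (Y ∘L F) - fdet (Y ∘L X)) := by
    rw [hmid]; ring
  calc ‖fdet (X ∘L Y) - fdet (Y ∘L X)‖
      ≤ ‖fdet (X ∘L Y) - fdet (F ∘L Y)‖ + ‖fdet (Y ∘L F) - fdet (Y ∘L X)‖ := by
        rw [hsplit]; exact norm_add_le _ _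
    _ < ε/2 + ε/2 := by
        rw [norm_sub_rev]
        exact add_lt_add h₁ h₂
    _ = ε := by ring



/-- dominated convergence for the nuclear weights. -/
lemma weight_tendsto (Z : ℕ → H →L[ℂ] H)
    (hZpt : ∀ a : H, Tendsto (fun n => ‖Z n a‖) atTop (nhds 0))
    (hZb : ∀ (n : ℕ) (a : H), ‖Z n a‖ ≤ 2 * ‖a‖)
    (u : ℕ → H) (c : ℕ → ℝ) (hc : ∀ k, 0 ≤ c k)
    (hw : Summable fun k => ‖u k‖ * c k) :
    Tendsto (fun n => ∑' k, ‖Z n (u k)‖ * c k) atTop (nhds 0) := by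
  rw [Metric.tendsto_atTop]
  intro ε hε
  have h8 : (0:ℝ) < ε/8 := by positivity
  obtain ⟨M, hM⟩ := ((tendsto_sum_nat_add (fun k => ‖u k‖ * c k)).eventually_lt_const h8).exists
  have hfin : Tendsto (fun n => ∑ k ∈ Finset.range M, ‖Z n (u k)‖ * c k) atTop (nhds 0) := by
    have h0 : Tendsto (fun n => ∑ k ∈ Finset.range M, ‖Z n (u k)‖ * c k) atTop
        (nhds (∑ _k ∈ Finset.range M, (0:ℝ))) := by
      apply tendsto_finset_sum
      intro k _
      simpa using (hZpt (u k)).mul_const (c k)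
    simpa using h0
  have h2' : (0:ℝ) < ε/2 := by positivity
  obtain ⟨N, hN⟩ := Metric.tendsto_atTop.mp hfin (ε/2) h2'
  refine ⟨N, fun n hn => ?_⟩
  have hsummZ : Summable fun k => ‖Z n (u k)‖ * c k := by
    refine Summable.of_nonneg_of_le (fun k => mul_nonneg (norm_nonneg _) (hc k))
      (fun k => ?_) (hw.mul_left 2)
    calc ‖Z n (u k)‖ * c k ≤ (2*‖u k‖) * c k := mul_le_mul_of_nonneg_right (hZb n (u k)) (hc k)
      _ = 2 * (‖u k‖ * c k) := by ring
  have hsplit := (Summable.sum_add_tsum_nat_add (f := fun k => ‖Z n (u k)‖ * c k) M hsummZ).symm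
  have htail_le : ∑' k, ‖Z n (u (k + M))‖ * c (k + M)
      ≤ 2 * ∑' k, ‖u (k+M)‖ * c (k+M) := by
    calc ∑' k, ‖Z n (u (k + M))‖ * c (k + M) ≤ ∑' k, 2 * (‖u (k+M)‖ * c (k+M)) := by
          refine Summable.tsum_le_tsum (fun k => ?_) ((summable_nat_add_iff M).2 hsummZ)
            (((summable_nat_add_iff M).2 hw).mul_left 2)
          calc ‖Z n (u (k+M))‖ * c (k+M) ≤ (2*‖u (k+M)‖) * c (k+M) :=
                mul_le_mul_of_nonneg_right (hZb n _) (hc _)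
            _ = 2 * (‖u (k+M)‖ * c (k+M)) := by ring
      _ = 2 * ∑' k, ‖u (k+M)‖ * c (k+M) := tsum_mul_left
  have hfinN := hN n hn
  rw [Real.dist_eq, sub_zero] at hfinN
  have hfinN' : ∑ k ∈ Finset.range M, ‖Z n (u k)‖ * c k < ε/2 :=
    lt_of_le_of_lt (le_abs_self _) hfinN
  rw [Real.dist_eq, sub_zero, abs_of_nonneg
    (tsum_nonneg (fun k => mul_nonneg (norm_nonneg _) (hc k)))]
  calc ∑' k, ‖Z n (u k)‖ * c k
      = (∑ k ∈ Finset.range M, ‖Z n (u k)‖ * c k)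
        + ∑' k, ‖Z n (u (k+M))‖ * c (k+M) := hsplit
    _ < ε/2 + 2 * (ε/8) := by
        apply add_lt_add_of_lt_of_le hfinN'
        calc ∑' k, ‖Z n (u (k+M))‖ * c (k+M) ≤ 2 * ∑' k, ‖u (k+M)‖ * c (k+M) := htail_le
          _ ≤ 2 * (ε/8) := by
              have := le_of_lt hM
              nlinarith [tsum_nonneg (L := SummationFilter.unconditional ℕ) (fun k => mul_nonneg (norm_nonneg (u (k+M))) (hc (k+M)) :
                ∀ k:ℕ, 0 ≤ ‖u (k+M)‖ * c (k+M))]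
    _ < ε := by linarith
  
lemma opJ_intertwine (B : H →L[ℂ] H) (t : ℝ) (ht : 0 < t) (x : H) :
    B (opJ B t x) = opJ (adjoint B) t (B x) := by
  have hCt : ∀ y : H, B (opCt B t y) = opCt (adjoint B) t (B y) := by
    intro y
    rw [opCt_apply, opCt_apply, map_add, map_smul]
    congr 1
    show B (adjoint B (B y)) = adjoint (adjoint B) (adjoint B (B y))
    rw [adjoint_adjoint]
  have h1 : opJ (adjoint B) t (B x)
      = opJ (adjoint B) t (B (opCt B t (opJ B t x))) := by
    rw [opCt_opJ_apply B t ht]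
  rw [h1, hCt, opJ_opCt_apply (adjoint B) t ht]

lemma opPi_adj_B (B : H →L[ℂ] H) (z : H) : opPi (adjoint B) (B z) = 0 := by
  haveI : CompleteSpace (LinearMap.ker (adjoint B : H →ₗ[ℂ] H)) :=
    (isClosed_ker (adjoint B)).completeSpace_coe
  have hmem : B z ∈ (LinearMap.ker (adjoint B : H →ₗ[ℂ] H))ᗮ := by
    rw [Submodule.mem_orthogonal]
    intro w hw
    rw [LinearMap.mem_ker, ContinuousLinearMap.coe_coe] at hw
    rw [← adjoint_inner_left B, hw, inner_zero_left]
  have h0 := Submodule.orthogonalProjectionOnto_apply_of_mem_orthogonal hmem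
  calc opPi (adjoint B) (B z)
      = ↑(Submodule.orthogonalProjection (LinearMap.ker (adjoint B : H →ₗ[ℂ] H)) (B z)) := rfl
    _ = 0 := by rw [h0]; rfl

end FredholmAux

/-- if `A, B` are bounded operators with `AB` and `BA` trace class, then
`det(I + AB) = det(I + BA)`, where `fdet T` denotes the Fredholm determinant `det(I+T)`. -/
theorem stmt_12 (A B : H →L[ℂ] H) (fdet : (H →L[ℂ] H) → ℂ)
    (hdet : IsFredholmDet fdet)
    (hAB : IsTraceClass (A ∘L B)) (hBA : IsTraceClass (B ∘L A)) :
    fdet (A ∘L B) = fdet (B ∘L A) := by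
  classical
  open FredholmAux ContinuousLinearMap Filter in
  obtain ⟨u, v, hwAB, hrepAB⟩ := id hAB
  obtain ⟨p, q, hwBA, hrepBA⟩ := id hBA
  apply FredholmAux.norm_eq_convergence
  intro ε hε
  obtain ⟨δ₁, hδ₁, hc₁⟩ := hdet.2 (A ∘L B) hAB (ε/2) (by positivity)
  obtain ⟨δ₂, hδ₂, hc₂⟩ := hdet.2 (B ∘L A) hBA (ε/2) (by positivity)
  -- positive parameters
  have htpos : ∀ n : ℕ, (0:ℝ) < 1/((n:ℝ)+1) := fun n => by positivity
  -- weight sequences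
  have hev₁ := ((FredholmAux.weight_tendsto
      (fun n => FredholmAux.opW B (1/((n:ℝ)+1)))
      (fun a => FredholmAux.opW_tendsto B a)
      (fun n a => FredholmAux.norm_opW_le B _ (htpos n) a)
      u (fun k => ‖v k‖) (fun k => norm_nonneg _) hwAB).eventually_lt_const hδ₁)
  have hwBA' : Summable fun k => ‖q k‖ * ‖p k‖ := by
    simpa [mul_comm] using hwBA
  have hev₂ := ((FredholmAux.weight_tendsto
      (fun n => FredholmAux.opW (ContinuousLinearMap.adjoint B) (1/((n:ℝ)+1)))
      (fun a => FredholmAux.opW_tendsto (ContinuousLinearMap.adjoint B) a)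
      (fun n a => FredholmAux.norm_opW_le (ContinuousLinearMap.adjoint B) _ (htpos n) a)
      q (fun k => ‖p k‖) (fun k => norm_nonneg _) hwBA').eventually_lt_const hδ₂)
  obtain ⟨n, hn₁, hn₂⟩ := (hev₁.and hev₂).exists
  set t : ℝ := 1/((n:ℝ)+1) with hTdef
  have ht : 0 < t := htpos n
  set W : H →L[ℂ] H := FredholmAux.opW B t with hWdef
  set W' : H →L[ℂ] H := FredholmAux.opW (ContinuousLinearMap.adjoint B) t with hW'def
  set J : H →L[ℂ] H := FredholmAux.opJ B t with hJdef
  -- the two compressed operators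
  set S₁ : H →L[ℂ] H := (A ∘L B) ∘L (J ∘L FredholmAux.opC B) with hS₁def
  set Y₂ : H →L[ℂ] H := B ∘L (J ∘L ContinuousLinearMap.adjoint B) with hY₂def
  set S₂ : H →L[ℂ] H := Y₂ ∘L (B ∘L A) with hS₂def
  -- trace class
  have hS₁tc : IsTraceClass S₁ := hAB.comp_right _
  have hS₂tc : IsTraceClass S₂ := hBA.comp_left _
  -- resolvent identity
  have hJC : ∀ y : H, J (FredholmAux.opC B y) = y - (t:ℂ) • J y := by
    intro y
    have h0 : FredholmAux.opC B y = FredholmAux.opCt B t y - (t:ℂ) • y := by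
      rw [FredholmAux.opCt_apply]; abel
    rw [hJdef, h0, map_sub, FredholmAux.opJ_opCt_apply B t ht, map_smul]
  -- first trace-norm estimate
  have h₁ : ‖fdet S₁ - fdet (A ∘L B)‖ < ε/2 := by
    apply hc₁ S₁ hS₁tc
    refine ⟨fun k => W (u k), v, ?_, fun x => ?_, ?_⟩
    · refine Summable.of_nonneg_of_le (fun k => by positivity) (fun k => ?_) (hwAB.mul_left 2)
      calc ‖W (u k)‖ * ‖v k‖ ≤ (2 * ‖u k‖) * ‖v k‖ :=
            mul_le_mul_of_nonneg_right (FredholmAux.norm_opW_le B t ht (u k)) (norm_nonneg _)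
        _ = 2 * (‖u k‖ * ‖v k‖) := by ring
    · have e1 : (S₁ - A ∘L B) x = (A ∘L B) (W x) := by
        rw [ContinuousLinearMap.sub_apply]
        have e0 : S₁ x = (A ∘L B) (J (FredholmAux.opC B x)) := rfl
        rw [e0, hJC x, map_sub, hWdef, FredholmAux.opW_apply, map_sub]
        have e2 : (A ∘L B) (FredholmAux.opPi B x) = 0 := by
          rw [ContinuousLinearMap.comp_apply, FredholmAux.B_opPi, map_zero]
        rw [e2]
        abel
      rw [e1, hrepAB (W x)]
      exact tsum_congr fun k => by
        rw [hWdef, FredholmAux.opW_inner_symm B t ht]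
    · exact hn₁
  -- second trace-norm estimate
  have h₂ : ‖fdet S₂ - fdet (B ∘L A)‖ < ε/2 := by
    apply hc₂ S₂ hS₂tc
    refine ⟨p, fun k => W' (q k), ?_, fun x => ?_, ?_⟩
    · refine Summable.of_nonneg_of_le (fun k => by positivity) (fun k => ?_) (hwBA.mul_left 2)
      calc ‖p k‖ * ‖W' (q k)‖ ≤ ‖p k‖ * (2 * ‖q k‖) :=
            mul_le_mul_of_nonneg_left
              (FredholmAux.norm_opW_le (ContinuousLinearMap.adjoint B) t ht (q k))
              (norm_nonneg _)
        _ = 2 * (‖p k‖ * ‖q k‖) := by ring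
    · have e1 : (S₂ - B ∘L A) x = W' ((B ∘L A) x) := by
        rw [ContinuousLinearMap.sub_apply]
        have e0 : S₂ x = B (J (FredholmAux.opC B (A x))) := rfl
        rw [e0, hJC (A x), map_sub, map_smul]
        rw [hJdef, FredholmAux.opJ_intertwine B t ht (A x)]
        rw [hW'def, FredholmAux.opW_apply]
        have e2 : FredholmAux.opPi (ContinuousLinearMap.adjoint B) (B (A x)) = 0 :=
          FredholmAux.opPi_adj_B B (A x)
        simp only [ContinuousLinearMap.comp_apply]
        rw [e2]
        abel
      rw [e1, hrepBA x, ContinuousLinearMap.map_tsum W' (FredholmAux.summable_term hwBA x)]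
      exact tsum_congr fun k => by rw [map_smul]
    · calc ∑' k, ‖p k‖ * ‖W' (q k)‖ = ∑' k, ‖W' (q k)‖ * ‖p k‖ :=
            tsum_congr fun k => mul_comm _ _
        _ < δ₂ := hn₂
  -- middle equality
  have hmid : fdet S₁ = fdet S₂ := by
    set X₁ : H →L[ℂ] H := (A ∘L B) ∘L (J ∘L ContinuousLinearMap.adjoint B) with hX₁def
    have hX₁tc : IsTraceClass X₁ := hAB.comp_right _
    have c₁ : X₁ ∘L B = S₁ := by ext x; rfl
    have c₂ : B ∘L X₁ = (B ∘L A) ∘L Y₂ := by ext x; rfl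
    calc fdet S₁ = fdet (X₁ ∘L B) := by rw [c₁]
      _ = fdet (B ∘L X₁) := FredholmAux.fdet_comp_comm hdet hX₁tc B
      _ = fdet ((B ∘L A) ∘L Y₂) := by rw [c₂]
      _ = fdet (Y₂ ∘L (B ∘L A)) := FredholmAux.fdet_comp_comm hdet hBA Y₂
      _ = fdet S₂ := by rw [hS₂def]
  -- conclude
  have hsplit : fdet (A ∘L B) - fdet (B ∘L A)
      = (fdet (A ∘L B) - fdet S₁) + (fdet S₂ - fdet (B ∘L A)) := by
    rw [hmid]; ring
  calc ‖fdet (A ∘L B) - fdet (B ∘L A)‖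
      ≤ ‖fdet (A ∘L B) - fdet S₁‖ + ‖fdet S₂ - fdet (B ∘L A)‖ := by
        rw [hsplit]; exact norm_add_le _ _
    _ < ε/2 + ε/2 := by
        rw [norm_sub_rev]
        exact add_lt_add h₁ h₂
    _ = ε := by ring
end
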